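/- arXiv:2506.23853 — 3 statements merged into one kernel-verified Lean document; each statement's English description precedes it below -/
import Mathlib

section
/- Let D > 0 and for y ∈ ℝ² define v_y(s) = dist(s - y, D·ℤ²) where distance is measured in the 1-norm. If Y is uniformly distributed on [0, D]², then for every s ∈ [0, D]², the random variable v_Y(s) has density u ↦ (4/D²)·(u·1_{[0,D/2]}(u) + (D - u)·1_{[D/2,D]}(u)) with respect to Lebesgue measure. -/
open MeasureTheory ProbabilityTheory Filter Set
open scoped ENNReal


/-- 1-norm distance from `s - y` to the lattice `D·ℤ^d`. -/
noncomputable def vdist (D : ℝ) {d : ℕ} (y s : Fin d → ℝ) : ℝ :=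
  sInf (Set.range fun j : Fin d → ℤ => ∑ i, |s i - y i + (j i : ℝ) * D|)

/-- uniform probability measure on the cube `[0, D]^d`. -/
noncomputable def unifCube (D : ℝ) (d : ℕ) : Measure (Fin d → ℝ) :=
  (ENNReal.ofReal (D ^ d))⁻¹ • volume.restrict (Set.Icc 0 fun _ => D)

noncomputable def phi (D x : ℝ) : ℝ := sInf (Set.range fun j : ℤ => |x + j * D|)

lemma phi_bdd (D x : ℝ) : BddBelow (Set.range fun j : ℤ => |x + j * D|) :=
  ⟨0, by rintro v ⟨j, rfl⟩; positivity⟩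

lemma phi_le (D x : ℝ) (k : ℤ) : phi D x ≤ |x + k * D| :=
  csInf_le (phi_bdd D x) ⟨k, rfl⟩

lemma phi_eq {D : ℝ} (hD : 0 < D) (x : ℝ) :
    phi D x = |x - D * round (x / D)| := by
  have hxD : x = (x / D) * D := by field_simp
  set t := x / D with ht
  have key : ∀ j : ℤ, |x - D * round t| ≤ |x + j * D| := by
    intro j
    have e1 : x - D * round t = D * (t - round t) := by rw [hxD]; ring
    have e2 : x + j * D = D * (t + j) := by rw [hxD]; ring
    have h1 : |x - D * round t| = D * |t - round t| := by
      rw [e1, abs_mul, abs_of_pos hD]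
    have h2 : |x + j * D| = D * |t + j| := by
      rw [e2, abs_mul, abs_of_pos hD]
    rw [h1, h2]
    apply mul_le_mul_of_nonneg_left _ hD.le
    rcases eq_or_ne j (-round t) with rfl | hj
    · apply le_of_eq
      push_cast
      ring_nf
    · have h3 : (1 : ℝ) ≤ |(j + round t : ℤ)| := by
        have : j + round t ≠ 0 := fun h => hj (by omega)
        exact_mod_cast Int.one_le_abs (by omega)
      have h4 : |t - round t| ≤ 1 / 2 := abs_sub_round t
      have h5 : |(j + round t : ℤ)| ≤ |t + j| + |t - round t| := by
        have := abs_sub_abs_le_abs_sub ((t : ℝ) + j) ((t : ℝ) - round t)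
        have h6 : |(t + j) - (t - round t)| = |(j + round t : ℤ)| := by
          push_cast; congr 1; ring
        nlinarith [abs_nonneg ((t:ℝ) + j), abs_nonneg ((t:ℝ) - round t),
          abs_sub ((t:ℝ) + j) ((t:ℝ) - round t)]
      linarith
  refine le_antisymm (le_trans (phi_le D x (-round t)) ?_) (le_csInf ⟨_, ⟨0, rfl⟩⟩ ?_)
  · apply le_of_eq; congr 1; push_cast; ring
  · rintro v ⟨j, rfl⟩; exact key j

lemma phi_measurable {D : ℝ} (hD : 0 < D) : Measurable (phi D) := by
  have : phi D = fun x => |x - D * (round (x / D) : ℤ)| := funext (phi_eq hD)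
  rw [this]
  have hr : Measurable fun x : ℝ => (round (x / D) : ℤ) := by
    simp only [round_eq]
    exact Int.measurable_floor.comp ((measurable_id.div_const D).add_const _)
  fun_prop

lemma phi_add_period (D x : ℝ) : phi D (x + D) = phi D x := by
  unfold phi
  congr 1
  ext v
  constructor
  · rintro ⟨j, rfl⟩; exact ⟨j + 1, by push_cast; ring_nf⟩
  · rintro ⟨j, rfl⟩; exact ⟨j - 1, by push_cast; ring_nf⟩

lemma phi_eq_self {D : ℝ} (hD : 0 < D) {x : ℝ} (hx : x ∈ Set.Ioc 0 (D / 2)) :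
    phi D x = x := by
  rw [phi_eq hD]
  rcases lt_or_eq_of_le hx.2 with h | h
  · have hxd : x / D < 1 / 2 := by rw [div_lt_iff₀ hD]; linarith
    have hxd0 : 0 < x / D := div_pos hx.1 hD
    have hr : round (x / D) = 0 := by
      rw [round_eq]
      apply Int.floor_eq_zero_iff.mpr
      exact ⟨by linarith, by linarith⟩
    rw [hr]; simp [abs_of_pos hx.1]
  · have hr : round (x / D) = 1 := by
      have : x / D = 1 / 2 := by rw [h]; field_simp
      rw [this]
      norm_num [round_eq]
    rw [hr]
    rw [abs_of_nonpos (by push_cast; linarith [hx.2])]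
    push_cast; linarith [h]

lemma phi_eq_sub {D : ℝ} (hD : 0 < D) {x : ℝ} (hx : x ∈ Set.Ioc (D / 2) D) :
    phi D x = D - x := by
  rw [phi_eq hD]
  have hr : round (x / D) = 1 := by
    rw [round_eq]
    have h1 : 1 / 2 < x / D := by rw [lt_div_iff₀ hD]; linarith [hx.1]
    have h2 : x / D ≤ 1 := by rw [div_le_one hD]; exact hx.2
    have := Int.floor_eq_iff (R := ℝ) (z := 1) (a := x / D + 1 / 2)
    rw [this]
    constructor
    · push_cast; linarith
    · push_cast; linarith
  rw [hr]
  rw [abs_of_nonpos (by push_cast; linarith [hx.2])]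
  push_cast; ring

lemma map_phi_base {D : ℝ} (hD : 0 < D) :
    Measure.map (phi D) (volume.restrict (Set.Icc 0 D)) =
      (2 : ℝ≥0∞) • volume.restrict (Set.Icc 0 (D / 2)) := by
  have hmeas := phi_measurable hD
  have hsplit : (volume : Measure ℝ).restrict (Set.Icc 0 D) =
      volume.restrict (Set.Ioc 0 (D / 2)) + volume.restrict (Set.Ioc (D / 2) D) := by
    rw [← Measure.restrict_union (Set.Ioc_disjoint_Ioc_of_le le_rfl) measurableSet_Ioc,
      Set.Ioc_union_Ioc_eq_Ioc (by linarith) (by linarith),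
      Measure.restrict_congr_set Ioc_ae_eq_Icc]
  rw [hsplit, Measure.map_add _ _ hmeas]
  have h1 : Measure.map (phi D) (volume.restrict (Set.Ioc 0 (D / 2))) =
      volume.restrict (Set.Ioc 0 (D / 2)) := by
    have : Measure.map (phi D) (volume.restrict (Set.Ioc 0 (D / 2))) =
        Measure.map id (volume.restrict (Set.Ioc 0 (D / 2))) := by
      apply Measure.map_congr
      rw [Filter.EventuallyEq, ae_restrict_iff' measurableSet_Ioc]
      exact ae_of_all _ fun x hx => phi_eq_self hD hx
    rw [this, Measure.map_id]
  have h2 : Measure.map (phi D) (volume.restrict (Set.Ioc (D / 2) D)) =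
      volume.restrict (Set.Ioc 0 (D / 2)) := by
    have e1 : Measure.map (phi D) (volume.restrict (Set.Ioc (D / 2) D)) =
        Measure.map (fun x => D - x) (volume.restrict (Set.Ioc (D / 2) D)) := by
      apply Measure.map_congr
      rw [Filter.EventuallyEq, ae_restrict_iff' measurableSet_Ioc]
      exact ae_of_all _ fun x hx => phi_eq_sub hD hx
    have hpre : (fun x : ℝ => D - x) ⁻¹' (Set.Ico 0 (D / 2)) = Set.Ioc (D / 2) D := by
      ext x
      simp only [Set.mem_preimage, Set.mem_Ico, Set.mem_Ioc]
      constructor <;> intro h <;> constructor <;> linarith [h.1, h.2]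
    have hmp := (Measure.measurePreserving_sub_left (volume : Measure ℝ) D).restrict_preimage
      (measurableSet_Ico (a := (0:ℝ)) (b := D / 2))
    rw [hpre] at hmp
    rw [e1, hmp.map_eq, Measure.restrict_congr_set Ico_ae_eq_Ioc]
  rw [h1, h2, ← two_smul ℝ≥0∞, Measure.restrict_congr_set Ioc_ae_eq_Icc]

lemma map_phi_shift {D : ℝ} (hD : 0 < D) {s : ℝ} (hs : s ∈ Set.Icc 0 D) :
    Measure.map (fun y => phi D (s - y)) (volume.restrict (Set.Icc 0 D)) =
      (2 : ℝ≥0∞) • volume.restrict (Set.Icc 0 (D / 2)) := by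
  have hmeas := phi_measurable hD
  have hcomp : (fun y : ℝ => phi D (s - y)) = phi D ∘ (fun y => s - y) := rfl
  rw [hcomp, ← Measure.map_map hmeas (show Measurable fun y : ℝ => s - y from measurable_const.sub measurable_id)]
  -- map (s - ·) (restrict (Icc 0 D)) = restrict (Icc (s - D) s)
  have hpre : (fun y : ℝ => s - y) ⁻¹' (Set.Icc (s - D) s) = Set.Icc 0 D := by
    ext x
    simp only [Set.mem_preimage, Set.mem_Icc]
    constructor <;> intro h <;> constructor <;> linarith [h.1, h.2]
  have hmp := (Measure.measurePreserving_sub_left (volume : Measure ℝ) s).restrict_preimage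
    (measurableSet_Icc (a := s - D) (b := s))
  rw [hpre] at hmp
  rw [hmp.map_eq]
  -- decompose Icc (s - D) s
  have hsplit : (volume : Measure ℝ).restrict (Set.Icc (s - D) s) =
      volume.restrict (Set.Ioc (s - D) 0) + volume.restrict (Set.Ioc 0 s) := by
    rw [← Measure.restrict_union (Set.Ioc_disjoint_Ioc_of_le le_rfl) measurableSet_Ioc,
      Set.Ioc_union_Ioc_eq_Ioc (by linarith [hs.2]) hs.1,
      Measure.restrict_congr_set Ioc_ae_eq_Icc]
  rw [hsplit, Measure.map_add _ _ hmeas]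
  -- left part translates by D
  have hL : Measure.map (phi D) (volume.restrict (Set.Ioc (s - D) 0)) =
      Measure.map (phi D) (volume.restrict (Set.Ioc s D)) := by
    have hpre2 : (fun y : ℝ => y + D) ⁻¹' (Set.Ioc s D) = Set.Ioc (s - D) 0 := by
      ext x
      simp only [Set.mem_preimage, Set.mem_Ioc]
      constructor <;> intro h <;> constructor <;> linarith [h.1, h.2]
    have hmp2 := (measurePreserving_add_right (volume : Measure ℝ) D).restrict_preimage
      (measurableSet_Ioc (a := s) (b := D))
    rw [hpre2] at hmp2
    rw [← hmp2.map_eq, Measure.map_map hmeas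
      (measurable_add_const D)]
    apply Measure.map_congr
    exact ae_of_all _ fun x => (phi_add_period D x).symm
  rw [hL, add_comm, ← Measure.map_add _ _ hmeas, ← Measure.restrict_union
    (Set.Ioc_disjoint_Ioc_of_le le_rfl) measurableSet_Ioc,
    Set.Ioc_union_Ioc_eq_Ioc hs.1 hs.2,
    Measure.restrict_congr_set Ioc_ae_eq_Icc]
  exact map_phi_base hD

lemma ofReal_max0 (a : ℝ) : ENNReal.ofReal (max 0 a) = ENNReal.ofReal a := by
  rcases le_total a 0 with h | h
  · rw [max_eq_left h, ENNReal.ofReal_zero, eq_comm, ENNReal.ofReal_eq_zero]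
    exact h
  · rw [max_eq_right h]

noncomputable def hfun (c u : ℝ) : ℝ := max 0 (min u (2 * c - u))

lemma hfun_cont (c : ℝ) : Continuous (hfun c) :=
  continuous_const.max (continuous_id.min (continuous_const.sub continuous_id))

lemma hfun_nonneg (c u : ℝ) : 0 ≤ hfun c u := le_max_left _ _


open intervalIntegral in
lemma myint_id (a b : ℝ) : ∫ x in a..b, x = (b ^ 2 - a ^ 2) / 2 := integral_id

lemma myint_const (a b k : ℝ) : ∫ _x in a..b, k = (b - a) * k := by
  simp [smul_eq_mul]

lemma myint_sub (a b t : ℝ) :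
    ∫ x in a..b, (t - x) = ((t - a) ^ 2 - (t - b) ^ 2) / 2 := by
  rw [intervalIntegral.integral_comp_sub_left (fun x => x) t, myint_id]

lemma conv_lemma {c : ℝ} (hc : 0 < c) :
    Measure.map (fun p : ℝ × ℝ => p.1 + p.2)
        ((volume.restrict (Set.Icc 0 c)).prod (volume.restrict (Set.Icc 0 c))) =
      volume.withDensity (fun u => ENNReal.ofReal (hfun c u)) := by
  have hadd : Measurable fun p : ℝ × ℝ => p.1 + p.2 := measurable_fst.add measurable_snd
  haveI hfin : IsFiniteMeasure ((volume : Measure ℝ).restrict (Set.Icc 0 c)) :=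
    ⟨by rw [Measure.restrict_apply_univ, Real.volume_Icc]; exact ENNReal.ofReal_lt_top⟩
  haveI : IsFiniteMeasure (Measure.map (fun p : ℝ × ℝ => p.1 + p.2)
      ((volume.restrict (Set.Icc 0 c)).prod (volume.restrict (Set.Icc 0 c)))) :=
    Measure.isFiniteMeasure_map _ _
  apply Measure.ext_of_Iic
  intro t
  -- LHS
  rw [Measure.map_apply hadd measurableSet_Iic,
    Measure.prod_apply (hadd measurableSet_Iic),
    withDensity_apply _ measurableSet_Iic]
  have hinner : ∀ x : ℝ, (volume.restrict (Set.Icc 0 c))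
      (Prod.mk x ⁻¹' ((fun p : ℝ × ℝ => p.1 + p.2) ⁻¹' Set.Iic t)) =
      ENNReal.ofReal (max 0 (min (t - x) c)) := by
    intro x
    have hset : Prod.mk x ⁻¹' ((fun p : ℝ × ℝ => p.1 + p.2) ⁻¹' Set.Iic t) =
        Set.Iic (t - x) := by
      ext y
      simp only [Set.mem_preimage, Set.mem_Iic]
      constructor <;> intro h <;> linarith
    rw [hset, Measure.restrict_apply measurableSet_Iic]
    have hint : Set.Iic (t - x) ∩ Set.Icc 0 c = Set.Icc 0 (min (t - x) c) := by
      ext z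
      simp only [Set.mem_inter_iff, Set.mem_Iic, Set.mem_Icc, le_min_iff]
      tauto
    rw [hint, Real.volume_Icc, ofReal_max0]
    congr 1
    simp
  simp_rw [hinner]
  -- convert LHS to an interval integral
  have hqcont : Continuous fun x => max 0 (min (t - x) c) :=
    continuous_const.max ((continuous_const.sub continuous_id).min continuous_const)
  have hL : ∫⁻ x in Set.Icc (0:ℝ) c, ENNReal.ofReal (max 0 (min (t - x) c)) =
      ENNReal.ofReal (∫ x in (0:ℝ)..c, max 0 (min (t - x) c)) := by
    rw [← ofReal_integral_eq_lintegral_ofReal (hqcont.integrableOn_Icc)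
      (ae_of_all _ fun x => le_max_left _ _)]
    rw [MeasureTheory.integral_Icc_eq_integral_Ioc,
      ← intervalIntegral.integral_of_le hc.le]
  rw [hL]
  -- RHS
  rcases le_or_gt t 0 with ht | ht
  · -- both sides zero
    have hR : ∫⁻ u in Set.Iic t, ENNReal.ofReal (hfun c u) = 0 := by
      rw [setLIntegral_congr_fun measurableSet_Iic
        (fun u (hu : u ∈ Set.Iic t) => ?_), lintegral_zero]
      have : min u (2 * c - u) ≤ 0 := le_trans (min_le_left _ _) (le_trans hu ht)
      rw [hfun, max_eq_left this, ENNReal.ofReal_zero]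
    rw [hR]
    have : ∫ x in (0:ℝ)..c, max 0 (min (t - x) c) = 0 := by
      rw [intervalIntegral.integral_congr (g := fun _ => (0:ℝ)) ?_,
        intervalIntegral.integral_const, smul_zero]
      intro x hx
      rw [Set.uIcc_of_le hc.le] at hx
      have : min (t - x) c ≤ 0 := le_trans (min_le_left _ _) (by linarith [hx.1])
      simp [max_eq_left this]
    rw [this, ENNReal.ofReal_zero]
  · -- t > 0 : RHS = ofReal (∫ u in 0..t, hfun c u)
    have hR : ∫⁻ u in Set.Iic t, ENNReal.ofReal (hfun c u) =
        ENNReal.ofReal (∫ u in (0:ℝ)..t, hfun c u) := by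
      rw [← Set.Iic_union_Ioc_eq_Iic ht.le,
        lintegral_union measurableSet_Ioc (Set.Iic_disjoint_Ioc le_rfl)]
      have h0 : ∫⁻ u in Set.Iic (0:ℝ), ENNReal.ofReal (hfun c u) = 0 := by
        rw [setLIntegral_congr_fun measurableSet_Iic
          (fun u (hu : u ∈ Set.Iic (0:ℝ)) => ?_), lintegral_zero]
        have : min u (2 * c - u) ≤ 0 := le_trans (min_le_left _ _) hu
        rw [hfun, max_eq_left this, ENNReal.ofReal_zero]
      rw [h0, zero_add,
        ← ofReal_integral_eq_lintegral_ofReal ((hfun_cont c).integrableOn_Ioc)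
          (ae_of_all _ fun u => hfun_nonneg c u),
        ← intervalIntegral.integral_of_le ht.le]
    rw [hR]
    congr 1
    -- now a real-variable computation
    have hid : ∀ a b : ℝ, IntervalIntegrable (fun x => max 0 (min (t - x) c)) volume a b :=
      fun a b => hqcont.intervalIntegrable a b
    have hih : ∀ a b : ℝ, IntervalIntegrable (hfun c) volume a b :=
      fun a b => (hfun_cont c).intervalIntegrable a b
    rcases le_or_gt t c with htc | htc
    · -- 0 < t ≤ c
      have hsplitL : ∫ x in (0:ℝ)..c, max 0 (min (t - x) c) =
          (∫ x in (0:ℝ)..t, max 0 (min (t - x) c)) +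
          ∫ x in t..c, max 0 (min (t - x) c) := by
        rw [intervalIntegral.integral_add_adjacent_intervals (hid 0 t) (hid t c)]
      have e1 : ∫ x in (0:ℝ)..t, max 0 (min (t - x) c) = ∫ x in (0:ℝ)..t, (t - x) := by
        apply intervalIntegral.integral_congr
        intro x hx
        rw [Set.uIcc_of_le ht.le] at hx
        show max 0 (min (t - x) c) = t - x
        rw [min_eq_left (by linarith [hx.1, hx.2]), max_eq_right (by linarith [hx.1, hx.2])]
      have e2 : ∫ x in t..c, max 0 (min (t - x) c) = 0 := by
        rw [intervalIntegral.integral_congr (g := fun _ => (0:ℝ)) ?_,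
          intervalIntegral.integral_const, smul_zero]
        intro x hx
        rw [Set.uIcc_of_le htc] at hx
        have : min (t - x) c ≤ 0 := le_trans (min_le_left _ _) (by linarith [hx.1])
        simp [max_eq_left this]
      have e3 : ∫ u in (0:ℝ)..t, hfun c u = ∫ u in (0:ℝ)..t, u := by
        apply intervalIntegral.integral_congr
        intro u hu
        rw [Set.uIcc_of_le ht.le] at hu
        show hfun c u = u
        rw [hfun, min_eq_left (by linarith [hu.1, hu.2]), max_eq_right hu.1]
      rw [hsplitL, e1, e2, e3, add_zero, myint_sub, myint_id]
      ring
    · rcases le_or_gt t (2 * c) with ht2 | ht2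
      · -- c < t ≤ 2c
        have hsplitL : ∫ x in (0:ℝ)..c, max 0 (min (t - x) c) =
            (∫ x in (0:ℝ)..(t - c), max 0 (min (t - x) c)) +
            ∫ x in (t - c)..c, max 0 (min (t - x) c) := by
          rw [intervalIntegral.integral_add_adjacent_intervals (hid 0 (t - c)) (hid (t - c) c)]
        have e1 : ∫ x in (0:ℝ)..(t - c), max 0 (min (t - x) c) =
            ∫ x in (0:ℝ)..(t - c), c := by
          apply intervalIntegral.integral_congr
          intro x hx
          rw [Set.uIcc_of_le (by linarith : (0:ℝ) ≤ t - c)] at hx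
          show max 0 (min (t - x) c) = c
          rw [min_eq_right (by linarith [hx.2]), max_eq_right hc.le]
        have e2 : ∫ x in (t - c)..c, max 0 (min (t - x) c) =
            ∫ x in (t - c)..c, (t - x) := by
          apply intervalIntegral.integral_congr
          intro x hx
          rw [Set.uIcc_of_le (by linarith : t - c ≤ c)] at hx
          show max 0 (min (t - x) c) = t - x
          rw [min_eq_left (by linarith [hx.1]), max_eq_right (by linarith [hx.2])]
        have hsplitR : ∫ u in (0:ℝ)..t, hfun c u =
            (∫ u in (0:ℝ)..c, hfun c u) + ∫ u in c..t, hfun c u := by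
          rw [intervalIntegral.integral_add_adjacent_intervals (hih 0 c) (hih c t)]
        have e3 : ∫ u in (0:ℝ)..c, hfun c u = ∫ u in (0:ℝ)..c, u := by
          apply intervalIntegral.integral_congr
          intro u hu
          rw [Set.uIcc_of_le hc.le] at hu
          show hfun c u = u
          rw [hfun, min_eq_left (by linarith [hu.2]), max_eq_right hu.1]
        have e4 : ∫ u in c..t, hfun c u = ∫ u in c..t, (2 * c - u) := by
          apply intervalIntegral.integral_congr
          intro u hu
          rw [Set.uIcc_of_le htc.le] at hu
          show hfun c u = 2 * c - u
          rw [hfun, min_eq_right (by linarith [hu.1]), max_eq_right (by linarith [hu.2])]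
        rw [hsplitL, e1, e2, hsplitR, e3, e4, myint_const, myint_sub, myint_sub,
          myint_id]
        ring
      · -- t > 2c
        have e1 : ∫ x in (0:ℝ)..c, max 0 (min (t - x) c) = ∫ x in (0:ℝ)..c, c := by
          apply intervalIntegral.integral_congr
          intro x hx
          rw [Set.uIcc_of_le hc.le] at hx
          show max 0 (min (t - x) c) = c
          rw [min_eq_right (by linarith [hx.2]), max_eq_right hc.le]
        have hsplitR : ∫ u in (0:ℝ)..t, hfun c u =
            (∫ u in (0:ℝ)..(2 * c), hfun c u) + ∫ u in (2 * c)..t, hfun c u := by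
          rw [intervalIntegral.integral_add_adjacent_intervals (hih 0 (2 * c)) (hih (2 * c) t)]
        have hsplitR2 : ∫ u in (0:ℝ)..(2 * c), hfun c u =
            (∫ u in (0:ℝ)..c, hfun c u) + ∫ u in c..(2 * c), hfun c u := by
          rw [intervalIntegral.integral_add_adjacent_intervals (hih 0 c) (hih c (2 * c))]
        have e3 : ∫ u in (0:ℝ)..c, hfun c u = ∫ u in (0:ℝ)..c, u := by
          apply intervalIntegral.integral_congr
          intro u hu
          rw [Set.uIcc_of_le hc.le] at hu
          show hfun c u = u
          rw [hfun, min_eq_left (by linarith [hu.2]), max_eq_right hu.1]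
        have e4 : ∫ u in c..(2 * c), hfun c u = ∫ u in c..(2 * c), (2 * c - u) := by
          apply intervalIntegral.integral_congr
          intro u hu
          rw [Set.uIcc_of_le (by linarith : c ≤ 2 * c)] at hu
          show hfun c u = 2 * c - u
          rw [hfun, min_eq_right (by linarith [hu.1]), max_eq_right (by linarith [hu.2])]
        have e5 : ∫ u in (2 * c)..t, hfun c u = 0 := by
          rw [intervalIntegral.integral_congr (g := fun _ => (0:ℝ)) ?_,
            intervalIntegral.integral_const, smul_zero]
          intro u hu
          rw [Set.uIcc_of_le ht2.le] at hu
          have : min u (2 * c - u) ≤ 0 := le_trans (min_le_right _ _) (by linarith [hu.1])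
          simp [hfun, max_eq_left this]
        rw [e1, hsplitR, hsplitR2, e3, e4, e5, add_zero, myint_const,
          myint_sub, myint_id]
        ring

lemma vdist_split {D : ℝ} (hD : 0 < D) (y s : Fin 2 → ℝ) :
    vdist D y s = phi D (s 0 - y 0) + phi D (s 1 - y 1) := by
  unfold vdist
  have hbdd : BddBelow (Set.range fun j : Fin 2 → ℤ =>
      ∑ i, |s i - y i + (j i : ℝ) * D|) := by
    refine ⟨0, ?_⟩
    rintro v ⟨j, rfl⟩
    positivity
  apply le_antisymm
  · apply csInf_le hbdd
    refine ⟨![-round ((s 0 - y 0) / D), -round ((s 1 - y 1) / D)], ?_⟩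
    simp only [Fin.sum_univ_two, Matrix.cons_val_zero, Matrix.cons_val_one, Matrix.head_cons]
    rw [phi_eq hD, phi_eq hD]
    congr 1 <;> · congr 1; push_cast; ring
  · apply le_csInf (Set.range_nonempty _)
    rintro v ⟨j, rfl⟩
    simp only [Fin.sum_univ_two]
    exact add_le_add (phi_le D _ (j 0)) (phi_le D _ (j 1))

lemma ind_eq_hfun {D : ℝ} (hD : 0 < D) {u : ℝ} (hu : u ≠ D / 2) :
    Set.indicator (Set.Icc 0 (D / 2)) (fun v => v) u +
      Set.indicator (Set.Icc (D / 2) D) (fun v => D - v) u = hfun (D / 2) u := by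
  have h2c : 2 * (D / 2) = D := by ring
  rw [hfun, h2c]
  by_cases h1 : u ∈ Set.Icc 0 (D / 2)
  · have h2 : u ∉ Set.Icc (D / 2) D := by
      simp only [Set.mem_Icc] at h1 ⊢
      intro h
      exact hu (le_antisymm h1.2 h.1)
    rw [Set.indicator_of_mem h1, Set.indicator_of_notMem h2, add_zero]
    simp only [Set.mem_Icc] at h1
    rw [min_eq_left (by linarith [h1.2]), max_eq_right h1.1]
  · by_cases h2 : u ∈ Set.Icc (D / 2) D
    · rw [Set.indicator_of_notMem h1, Set.indicator_of_mem h2, zero_add]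
      simp only [Set.mem_Icc] at h2
      rw [min_eq_right (by linarith [h2.1]), max_eq_right (by linarith [h2.2])]
    · rw [Set.indicator_of_notMem h1, Set.indicator_of_notMem h2, add_zero]
      simp only [Set.mem_Icc, not_and_or, not_le] at h1 h2
      rcases h1 with h1 | h1
      · rw [eq_comm, max_eq_left (le_trans (min_le_left _ _) (by linarith))]
      · rcases h2 with h2 | h2
        · linarith
        · rw [eq_comm, max_eq_left (le_trans (min_le_right _ _) (by linarith))]

lemma my_prod_smul {μ ν : Measure ℝ} [SFinite μ] [SFinite ν] :
    ((2 : ℝ≥0∞) • μ).prod ((2 : ℝ≥0∞) • ν) = (4 : ℝ≥0∞) • (μ.prod ν) := by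
  ext A hA
  rw [Measure.prod_apply hA, Measure.smul_apply, Measure.prod_apply hA,
    lintegral_smul_measure]
  simp only [Measure.smul_apply, smul_eq_mul]
  rw [lintegral_const_mul' _ _ (by norm_num : (2:ℝ≥0∞) ≠ ⊤)]
  rw [← mul_assoc]
  norm_num

theorem stmt1 {Ω : Type*} [MeasureSpace Ω] [IsProbabilityMeasure (ℙ : Measure Ω)]
    (D : ℝ) (hD : 0 < D) (Y : Ω → Fin 2 → ℝ) (hYmeas : Measurable Y)
    (hYlaw : Measure.map Y ℙ = unifCube D 2) :
    ∀ s ∈ Set.Icc (0 : Fin 2 → ℝ) fun _ => D,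
      Measure.map (fun ω => vdist D (Y ω) s) ℙ =
        volume.withDensity fun u => ENNReal.ofReal
          ((4 / D ^ 2) *
            (Set.indicator (Set.Icc 0 (D / 2)) (fun v => v) u +
              Set.indicator (Set.Icc (D / 2) D) (fun v => D - v) u)) := by
  intro s hs
  have hphi := phi_measurable hD
  have hs0 : s 0 ∈ Set.Icc 0 D := ⟨hs.1 0, hs.2 0⟩
  have hs1 : s 1 ∈ Set.Icc 0 D := ⟨hs.1 1, hs.2 1⟩
  have hg0 : Measurable fun x : ℝ => phi D (s 0 - x) :=
    hphi.comp (measurable_const.sub measurable_id)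
  have hg1 : Measurable fun x : ℝ => phi D (s 1 - x) :=
    hphi.comp (measurable_const.sub measurable_id)
  have hadd : Measurable fun p : ℝ × ℝ => p.1 + p.2 := measurable_fst.add measurable_snd
  have hF : Measurable fun y : Fin 2 → ℝ => phi D (s 0 - y 0) + phi D (s 1 - y 1) :=
    ((hphi.comp (measurable_const.sub (measurable_pi_apply 0))).add
      (hphi.comp (measurable_const.sub (measurable_pi_apply 1))))
  have hGmeas : Measurable fun p : ℝ × ℝ => phi D (s 0 - p.1) + phi D (s 1 - p.2) :=
    (hphi.comp (measurable_const.sub measurable_fst)).add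
      (hphi.comp (measurable_const.sub measurable_snd))
  -- rewrite the random variable
  have hvdist : (fun ω => vdist D (Y ω) s) =
      (fun y : Fin 2 → ℝ => phi D (s 0 - y 0) + phi D (s 1 - y 1)) ∘ Y := by
    funext ω; exact vdist_split hD (Y ω) s
  rw [hvdist, ← Measure.map_map hF hYmeas, hYlaw, unifCube, Measure.map_smul]
  -- go through ℝ × ℝ
  have hpre : (⇑(MeasurableEquiv.finTwoArrow (α := ℝ))) ⁻¹'
      (Set.Icc 0 D ×ˢ Set.Icc 0 D) = Set.Icc (0 : Fin 2 → ℝ) (fun _ => D) := by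
    ext y
    simp only [MeasurableEquiv.finTwoArrow_apply, Set.mem_preimage, Set.mem_prod,
      Set.mem_Icc, Pi.le_def, Fin.forall_fin_two]
    tauto
  have hmp := (volume_preserving_finTwoArrow ℝ).restrict_preimage
    (s := Set.Icc (0:ℝ) D ×ˢ Set.Icc (0:ℝ) D) (measurableSet_Icc.prod measurableSet_Icc)
  rw [hpre] at hmp
  have hcomp : (fun y : Fin 2 → ℝ => phi D (s 0 - y 0) + phi D (s 1 - y 1)) =
      (fun p : ℝ × ℝ => phi D (s 0 - p.1) + phi D (s 1 - p.2)) ∘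
        ⇑(MeasurableEquiv.finTwoArrow (α := ℝ)) := by
    funext y
    simp [MeasurableEquiv.finTwoArrow_apply]
  rw [hcomp, ← Measure.map_map hGmeas (MeasurableEquiv.measurable _), hmp.map_eq,
    Measure.volume_eq_prod, ← Measure.prod_restrict]
  -- split as a product map
  have hG2 : (fun p : ℝ × ℝ => phi D (s 0 - p.1) + phi D (s 1 - p.2)) =
      (fun p : ℝ × ℝ => p.1 + p.2) ∘
        (Prod.map (fun x => phi D (s 0 - x)) (fun x => phi D (s 1 - x))) := rfl
  rw [hG2, ← Measure.map_map hadd (hg0.prodMap hg1),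
    ← Measure.map_prod_map _ _ hg0 hg1, map_phi_shift hD hs0, map_phi_shift hD hs1,
    my_prod_smul, Measure.map_smul, conv_lemma (by linarith : (0:ℝ) < D / 2)]
  -- identify the density
  have hdens : (volume : Measure ℝ).withDensity (fun u => ENNReal.ofReal
      ((4 / D ^ 2) *
        (Set.indicator (Set.Icc 0 (D / 2)) (fun v => v) u +
          Set.indicator (Set.Icc (D / 2) D) (fun v => D - v) u))) =
      ENNReal.ofReal (4 / D ^ 2) •
        (volume : Measure ℝ).withDensity (fun u => ENNReal.ofReal (hfun (D / 2) u)) := by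
    rw [← withDensity_smul _ ((hfun_cont (D / 2)).measurable.ennreal_ofReal)]
    apply withDensity_congr_ae
    have hsub : {u : ℝ | ¬ (ENNReal.ofReal ((4 / D ^ 2) *
        (Set.indicator (Set.Icc 0 (D / 2)) (fun v => v) u +
          Set.indicator (Set.Icc (D / 2) D) (fun v => D - v) u)) =
        (ENNReal.ofReal (4 / D ^ 2) • fun u => ENNReal.ofReal (hfun (D / 2) u)) u)}
        ⊆ {(D / 2)} := by
      intro u hu
      simp only [Set.mem_setOf_eq, Pi.smul_apply, smul_eq_mul] at hu
      by_contra hne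
      apply hu
      rw [← ind_eq_hfun hD (by simpa using hne),
        ENNReal.ofReal_mul (by positivity)]
    exact measure_mono_null hsub (measure_singleton _)
  rw [hdens, smul_smul]
  congr 1
  rw [ENNReal.ofReal_div_of_pos (by positivity), ENNReal.div_eq_inv_mul]
  norm_num
end

section
/- Let n ≥ 1 and let ψ : [0, ∞) → [0, ∞) satisfy: ψ(0) = 1, ψ(x) = 0 for x ≥ 1, ψ^{(n-1)} exists and is Lipschitz on [0, 1], ψ is n times differentiable at 0 with ψ^{(n)}(0) ≠ 0 and ψ^{(k)}(0) = 0 for 1 ≤ k ≤ n - 1. Then there exists a constant C ∈ (0, ∞) such that for all x, y ≥ 0, |ψ(x) - ψ(y)| ≤ C·(max(x, y))^{n-1}·|x - y|. -/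
open Filter Set

theorem stmt2 (n : ℕ) (hn : 1 ≤ n) (ψ : ℝ → ℝ)
    (hψ0 : ψ 0 = 1) (hψ1 : ∀ x : ℝ, 1 ≤ x → ψ x = 0)
    (hψnonneg : ∀ x : ℝ, 0 ≤ x → 0 ≤ ψ x)
    (hsmooth : ContDiffOn ℝ (n - 1) ψ (Set.Icc 0 1))
    (hLip : ∃ K : NNReal,
      LipschitzOnWith K (iteratedDerivWithin (n - 1) ψ (Set.Icc 0 1)) (Set.Icc 0 1))
    (hdiff : DifferentiableWithinAt ℝ
      (iteratedDerivWithin (n - 1) ψ (Set.Icc 0 1)) (Set.Icc 0 1) 0)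
    (hn0 : iteratedDerivWithin n ψ (Set.Icc 0 1) 0 ≠ 0)
    (hzero : ∀ k : ℕ, 1 ≤ k → k ≤ n - 1 → iteratedDerivWithin k ψ (Set.Icc 0 1) 0 = 0) :
    ∃ C : ℝ, 0 < C ∧ ∀ x y : ℝ, 0 ≤ x → 0 ≤ y →
      |ψ x - ψ y| ≤ C * max x y ^ (n - 1) * |x - y| := by
  obtain ⟨K, hK⟩ := hLip
  have hsm : ContDiffOn ℝ ((n - 1 : ℕ)) ψ (Set.Icc 0 1) := by
    convert hsmooth using 2
    norm_cast
  have hK0 : (0:ℝ) ≤ K := K.coe_nonneg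
  have husD : UniqueDiffOn ℝ (Set.Icc (0:ℝ) 1) := uniqueDiffOn_Icc one_pos
  have h0mem : (0:ℝ) ∈ Set.Icc (0:ℝ) 1 := ⟨le_refl _, zero_le_one⟩
  -- bound on iterated derivatives (only meaningful for n ≥ 2)
  have hbound : ∀ m : ℕ, 2 ≤ n → m ≤ n - 2 → ∀ t ∈ Set.Icc (0:ℝ) 1,
      |iteratedDerivWithin (n - 1 - m) ψ (Set.Icc 0 1) t| ≤ (K:ℝ) * t ^ (m + 1) := by
    intro m
    induction m with
    | zero =>
      intro hn2 _ t ht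
      have hz : iteratedDerivWithin (n - 1) ψ (Set.Icc 0 1) 0 = 0 :=
        hzero (n - 1) (by omega) (by omega)
      have := hK.dist_le_mul t ht 0 h0mem
      rw [Real.dist_eq, Real.dist_eq, hz, sub_zero, sub_zero, abs_of_nonneg ht.1] at this
      simpa using this
    | succ m ih =>
      intro hn2 hm t ht
      have hIH := ih hn2 (by omega)
      have hkk : n - 1 - (m + 1) + 1 = n - 1 - m := by omega
      have hk1 : 1 ≤ n - 1 - (m + 1) := by omega
      have hz : iteratedDerivWithin (n - 1 - (m + 1)) ψ (Set.Icc 0 1) 0 = 0 :=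
        hzero _ hk1 (by omega)
      have hdiffk : DifferentiableOn ℝ
          (iteratedDerivWithin (n - 1 - (m + 1)) ψ (Set.Icc 0 1)) (Set.Icc 0 1) := by
        apply hsm.differentiableOn_iteratedDerivWithin _ husD
        exact_mod_cast Nat.cast_lt.mpr (show n - 1 - (m+1) < n - 1 by omega)
      rcases eq_or_lt_of_le ht.1 with h0t | h0t
      · rw [← h0t, hz]
        simp
      have husD' : UniqueDiffOn ℝ (Set.Icc (0:ℝ) t) := uniqueDiffOn_Icc h0t
      have hsub : Set.Icc (0:ℝ) t ⊆ Set.Icc (0:ℝ) 1 :=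
        Set.Icc_subset_Icc le_rfl ht.2
      have hbnd : ∀ z ∈ Set.Icc (0:ℝ) t,
          ‖derivWithin (iteratedDerivWithin (n - 1 - (m + 1)) ψ (Set.Icc 0 1))
            (Set.Icc 0 t) z‖ ≤ (K:ℝ) * t ^ (m + 1) := by
        intro z hz'
        rw [derivWithin_subset hsub (husD' z hz') (hdiffk z (hsub hz'))]
        rw [← iteratedDerivWithin_succ, hkk]
        calc ‖iteratedDerivWithin (n - 1 - m) ψ (Set.Icc 0 1) z‖
            ≤ (K:ℝ) * z ^ (m + 1) := hIH z (hsub hz')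
          _ ≤ (K:ℝ) * t ^ (m + 1) := by
              apply mul_le_mul_of_nonneg_left (pow_le_pow_left₀ hz'.1 hz'.2 _) hK0
      have := Convex.norm_image_sub_le_of_norm_derivWithin_le (hdiffk.mono hsub) hbnd
        (convex_Icc 0 t) ⟨le_refl _, h0t.le⟩ ⟨h0t.le, le_refl _⟩
      rw [hz, sub_zero, sub_zero, Real.norm_eq_abs, Real.norm_eq_abs,
        abs_of_nonneg h0t.le] at this
      calc |iteratedDerivWithin (n - 1 - (m + 1)) ψ (Set.Icc 0 1) t|
          ≤ (K:ℝ) * t ^ (m + 1) * t := this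
        _ = (K:ℝ) * t ^ (m + 1 + 1) := by ring
  -- key estimate on [0,1]
  have key : ∀ x y : ℝ, 0 ≤ x → x ≤ y → y ≤ 1 →
      |ψ x - ψ y| ≤ (K:ℝ) * y ^ (n - 1) * (y - x) := by
    intro x y hx hxy hy1
    rcases eq_or_lt_of_le (by omega : 1 ≤ n) with h1 | h2
    · -- n = 1
      have hn1 : n - 1 = 0 := by omega
      rw [hn1] at hK ⊢
      rw [iteratedDerivWithin_zero] at hK
      have := hK.dist_le_mul x ⟨hx, hxy.trans hy1⟩ y ⟨hx.trans hxy, hy1⟩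
      rw [Real.dist_eq, Real.dist_eq, abs_of_nonpos (show x - y ≤ 0 by linarith),
        neg_sub] at this
      simpa using this
    · -- n ≥ 2
      have hn2 : 2 ≤ n := h2
      rcases eq_or_lt_of_le hxy with rfl | hxy'
      · simp
      have hy0 : 0 < y := lt_of_le_of_lt hx hxy'
      have hb1 : ∀ t ∈ Set.Icc (0:ℝ) 1,
          |iteratedDerivWithin 1 ψ (Set.Icc 0 1) t| ≤ (K:ℝ) * t ^ (n - 1) := by
        intro t ht
        have := hbound (n - 2) hn2 le_rfl t ht
        have e1 : n - 1 - (n - 2) = 1 := by omega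
        have e2 : n - 2 + 1 = n - 1 := by omega
        rwa [e1, e2] at this
      have hψdiff : DifferentiableOn ℝ ψ (Set.Icc (0:ℝ) 1) := by
        apply hsm.differentiableOn
        exact_mod_cast (show n - 1 ≠ 0 by omega)
      have husD' : UniqueDiffOn ℝ (Set.Icc (0:ℝ) y) := uniqueDiffOn_Icc hy0
      have hsub : Set.Icc (0:ℝ) y ⊆ Set.Icc (0:ℝ) 1 := Set.Icc_subset_Icc le_rfl hy1
      have hbnd : ∀ z ∈ Set.Icc (0:ℝ) y,
          ‖derivWithin ψ (Set.Icc 0 y) z‖ ≤ (K:ℝ) * y ^ (n - 1) := by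
        intro z hz'
        rw [derivWithin_subset hsub (husD' z hz') (hψdiff z (hsub hz'))]
        rw [← iteratedDerivWithin_one]
        calc ‖iteratedDerivWithin 1 ψ (Set.Icc 0 1) z‖
            ≤ (K:ℝ) * z ^ (n - 1) := hb1 z (hsub hz')
          _ ≤ (K:ℝ) * y ^ (n - 1) := by
              apply mul_le_mul_of_nonneg_left (pow_le_pow_left₀ hz'.1 hz'.2 _) hK0
      have := Convex.norm_image_sub_le_of_norm_derivWithin_le (hψdiff.mono hsub) hbnd
        (convex_Icc 0 y) ⟨hx, hxy⟩ ⟨hy0.le, le_refl _⟩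
      rw [Real.norm_eq_abs, Real.norm_eq_abs, abs_of_nonneg (by linarith : (0:ℝ) ≤ y - x),
        abs_sub_comm] at this
      exact this
  refine ⟨(K:ℝ) + 1, by positivity, ?_⟩
  suffices h : ∀ x y : ℝ, 0 ≤ x → 0 ≤ y → x ≤ y →
      |ψ x - ψ y| ≤ ((K:ℝ) + 1) * max x y ^ (n - 1) * |x - y| by
    intro x y hx hy
    rcases le_total x y with hxy | hxy
    · exact h x y hx hy hxy
    · rw [abs_sub_comm (ψ x), abs_sub_comm x y, max_comm]
      exact h y x hy hx hxy
  intro x y hx hy hxy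
  rw [max_eq_right hxy, abs_of_nonpos (by linarith : x - y ≤ 0), neg_sub]
  by_cases hy1 : y ≤ 1
  · calc |ψ x - ψ y| ≤ (K:ℝ) * y ^ (n - 1) * (y - x) := key x y hx hxy hy1
      _ ≤ ((K:ℝ) + 1) * y ^ (n - 1) * (y - x) := by
          apply mul_le_mul_of_nonneg_right (mul_le_mul_of_nonneg_right (by linarith)
            (pow_nonneg hy _)) (by linarith)
  · push_neg at hy1
    by_cases hx1 : 1 ≤ x
    · rw [hψ1 x hx1, hψ1 y hy1.le, sub_self, abs_zero]
      exact mul_nonneg (mul_nonneg (by linarith) (pow_nonneg hy _)) (by linarith)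
    · push_neg at hx1
      have h1 := key x 1 hx hx1.le le_rfl
      rw [hψ1 1 le_rfl] at h1
      rw [hψ1 y hy1.le]
      have hpow : (1:ℝ) ≤ y ^ (n - 1) := one_le_pow₀ hy1.le
      have hKy : (K:ℝ) * 1 ^ (n - 1) * (1 - x) ≤ ((K:ℝ) + 1) * y ^ (n - 1) * (y - x) := by
        rw [one_pow, mul_one]
        calc (K:ℝ) * (1 - x) ≤ (K:ℝ) * (y - x) :=
              mul_le_mul_of_nonneg_left (by linarith) hK0
          _ ≤ ((K:ℝ) + 1) * (y - x) :=
              mul_le_mul_of_nonneg_right (by linarith) (by linarith)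
          _ ≤ ((K:ℝ) + 1) * y ^ (n - 1) * (y - x) := by
              apply mul_le_mul_of_nonneg_right _ (by linarith)
              exact le_mul_of_one_le_right (by linarith) hpow
      linarith [h1]
end

section
/- With the notation of the rand model: Z₁ Pareto(β-1) on [1,∞), Y₁ uniform on [0,D]^d independent of Z₁, ψ ∈ ℋⁿ, and X₁(s) = Z₁^{α-d}·ψ(v_{Y₁}(s)/Z₁). If κ := (α - n - d)/(β - 1) < 1/2, then for all s, x ∈ [0, D]^d, E[(X₁(s) - X₁(x))²] ≤ C·|s - x|₁² for some constant C depending only on ψ, β, α, n, d, D. -/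
open MeasureTheory ProbabilityTheory Filter Set

private lemma mono_aux {f f' : ℝ → ℝ}
    (hf : ∀ t ∈ Set.Icc (0:ℝ) 1, HasDerivWithinAt f (f' t) (Set.Icc 0 1) t)
    (h0 : f 0 = 0) (hd : ∀ t ∈ Set.Ioo (0:ℝ) 1, 0 ≤ f' t) :
    ∀ t ∈ Set.Icc (0:ℝ) 1, 0 ≤ f t := by
  have hcont : ContinuousOn f (Set.Icc 0 1) := fun t ht => (hf t ht).continuousWithinAt
  have hmono : MonotoneOn f (Set.Icc (0:ℝ) 1) := by
    apply monotoneOn_of_deriv_nonneg (convex_Icc 0 1) hcont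
    · intro t ht
      rw [interior_Icc] at ht
      exact (((hf t (Set.Ioo_subset_Icc_self ht)).hasDerivAt
        (Icc_mem_nhds ht.1 ht.2)).differentiableAt).differentiableWithinAt
    · intro t ht
      rw [interior_Icc] at ht
      rw [((hf t (Set.Ioo_subset_Icc_self ht)).hasDerivAt (Icc_mem_nhds ht.1 ht.2)).deriv]
      exact hd t ht
  intro t ht
  calc (0:ℝ) = f 0 := h0.symm
  _ ≤ f t := hmono (Set.left_mem_Icc.2 one_pos.le) ht ht.1

private lemma bound_aux {f f' : ℝ → ℝ} {K : ℝ} {m : ℕ} (hm : 1 ≤ m) (hK : 0 ≤ K)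
    (hf : ∀ t ∈ Set.Icc (0:ℝ) 1, HasDerivWithinAt f (f' t) (Set.Icc 0 1) t)
    (h0 : f 0 = 0)
    (hb : ∀ t ∈ Set.Icc (0:ℝ) 1, |f' t| ≤ K * t ^ (m - 1)) :
    ∀ t ∈ Set.Icc (0:ℝ) 1, |f t| ≤ K * t ^ m := by
  have hpow : ∀ t : ℝ, HasDerivAt (fun x : ℝ => K * x ^ m) (K * (m * t ^ (m-1))) t :=
    fun t => (hasDerivAt_pow m t).const_mul K
  have key : ∀ t ∈ Set.Ioo (0:ℝ) 1, K * t ^ (m-1) ≤ K * (m * t ^ (m-1)) := by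
    intro t ht
    have h1 : (1:ℝ) ≤ m := by exact_mod_cast hm
    have h2 : (0:ℝ) ≤ t ^ (m-1) := pow_nonneg ht.1.le _
    have h3 : K * t^(m-1) * 1 ≤ K * t^(m-1) * m := by
      apply mul_le_mul_of_nonneg_left h1 (mul_nonneg hK h2)
    nlinarith [h3]
  have hA : ∀ t ∈ Set.Ioo (0:ℝ) 1, 0 ≤ K * (m * t^(m-1)) + f' t := by
    intro t ht
    have h2 := (abs_le.1 (hb t (Set.Ioo_subset_Icc_self ht))).1
    have := key t ht
    linarith
  have hB : ∀ t ∈ Set.Ioo (0:ℝ) 1, 0 ≤ K * (m * t^(m-1)) - f' t := by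
    intro t ht
    have h2 := (abs_le.1 (hb t (Set.Ioo_subset_Icc_self ht))).2
    have := key t ht
    linarith
  intro t ht
  rw [abs_le]
  constructor
  · have := mono_aux (f := fun x => K * x ^ m + f x) (f' := fun x => K * (m * x^(m-1)) + f' x)
      (fun x hx => ((hpow x).hasDerivWithinAt).add (hf x hx)) (by simp [h0, zero_pow (by omega : m ≠ 0)]) hA t ht
    linarith
  · have := mono_aux (f := fun x => K * x ^ m - f x) (f' := fun x => K * (m * x^(m-1)) - f' x)
      (fun x hx => ((hpow x).hasDerivWithinAt).sub (hf x hx)) (by simp [h0, zero_pow (by omega : m ≠ 0)]) hB t ht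
    linarith

private lemma psi_bound {n : ℕ} (hn : 1 ≤ n) {ψ : ℝ → ℝ}
    (hψ1 : ∀ x : ℝ, 1 ≤ x → ψ x = 0)
    (hsmooth : ContDiffOn ℝ (n - 1) ψ (Set.Icc 0 1))
    (hLip : ∃ K : NNReal,
      LipschitzOnWith K (iteratedDerivWithin (n - 1) ψ (Set.Icc 0 1)) (Set.Icc 0 1))
    (hzero : ∀ k : ℕ, 1 ≤ k → k ≤ n - 1 → iteratedDerivWithin k ψ (Set.Icc 0 1) 0 = 0) :
    ∃ L : ℝ, 0 < L ∧ ∀ a b : ℝ, 0 ≤ a → a ≤ b → |ψ b - ψ a| ≤ L * b ^ (n - 1) * (b - a) := by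
  obtain ⟨K, hK⟩ := hLip
  set L : ℝ := (K : ℝ) + 1 with hLdef
  have hL : 0 < L := by positivity
  refine ⟨L, hL, ?_⟩
  set g : ℕ → ℝ → ℝ := fun k => iteratedDerivWithin k ψ (Set.Icc 0 1) with hgdef
  have hLip' : ∀ a ∈ Set.Icc (0:ℝ) 1, ∀ b ∈ Set.Icc (0:ℝ) 1,
      |g (n-1) b - g (n-1) a| ≤ L * |b - a| := by
    intro a ha b hb
    have := hK.dist_le_mul b hb a ha
    rw [Real.dist_eq, Real.dist_eq] at this
    have hKL : (K : ℝ) ≤ L := by simp [hLdef]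
    calc |g (n-1) b - g (n-1) a| ≤ (K : ℝ) * |b - a| := this
    _ ≤ L * |b - a| := by
        apply mul_le_mul_of_nonneg_right hKL (abs_nonneg _)
  -- core bound for arguments in [0,1]
  have core : ∀ a b : ℝ, 0 ≤ a → a ≤ b → b ≤ 1 → |ψ b - ψ a| ≤ L * b ^ (n - 1) * (b - a) := by
    intro a b ha hab hb1
    have haI : a ∈ Set.Icc (0:ℝ) 1 := ⟨ha, hab.trans hb1⟩
    have hbI : b ∈ Set.Icc (0:ℝ) 1 := ⟨ha.trans hab, hb1⟩
    rcases eq_or_lt_of_le hn with hn1 | hn2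
    · -- n = 1 case : ψ is Lipschitz
      have hg0 : g (n-1) = ψ := by
        have h : n - 1 = 0 := by omega
        simp only [hgdef, h, iteratedDerivWithin_zero]
      have := hLip' a haI b hbI
      rw [hg0] at this
      have hpow1 : b ^ (n - 1) = 1 := by
        have : n - 1 = 0 := by omega
        rw [this, pow_zero]
      rw [hpow1, mul_one]
      calc |ψ b - ψ a| ≤ L * |b - a| := this
      _ = L * (b - a) := by rw [abs_of_nonneg (by linarith)]
    · -- n ≥ 2 case
      have hn2' : 2 ≤ n := hn2
      have hu : UniqueDiffOn ℝ (Set.Icc (0:ℝ) 1) := uniqueDiffOn_Icc one_pos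
      have hderiv : ∀ k : ℕ, k + 1 ≤ n - 1 → ∀ t ∈ Set.Icc (0:ℝ) 1,
          HasDerivWithinAt (g k) (g (k+1) t) (Set.Icc 0 1) t := by
        intro k hk t ht
        have hlt : (k : WithTop ℕ∞) < (n : WithTop ℕ∞) - 1 := by
          have h1 : ((n:ℕ) : WithTop ℕ∞) - 1 = ((n - 1 : ℕ) : WithTop ℕ∞) := by
            obtain ⟨m, rfl⟩ : ∃ m, n = m + 1 := ⟨n - 1, by omega⟩
            norm_cast
          rw [h1]
          exact_mod_cast (by omega : k < n - 1)
        have hdiff : DifferentiableWithinAt ℝ (g k) (Set.Icc 0 1) t :=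
          (hsmooth.differentiableOn_iteratedDerivWithin hlt hu) t ht
        have h2 := hdiff.hasDerivWithinAt
        rwa [show g (k+1) t = derivWithin (g k) (Set.Icc 0 1) t from
          congrFun iteratedDerivWithin_succ t]
      have base : ∀ t ∈ Set.Icc (0:ℝ) 1, |g (n-1) t| ≤ L * t := by
        intro t ht
        have h0 : g (n-1) 0 = 0 := hzero (n-1) (by omega) le_rfl
        have := hLip' 0 (Set.left_mem_Icc.2 one_pos.le) t ht
        rw [h0, sub_zero, sub_zero, abs_of_nonneg ht.1] at this
        exact this
      have main : ∀ j k : ℕ, k + j = n - 1 → 1 ≤ k →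
          ∀ t ∈ Set.Icc (0:ℝ) 1, |g k t| ≤ L * t ^ (n - k) := by
        intro j
        induction j with
        | zero =>
          intro k hk _ t ht
          have hk' : k = n - 1 := by omega
          subst hk'
          have : n - (n - 1) = 1 := by omega
          rw [this, pow_one]
          exact base t ht
        | succ j ih =>
          intro k hk hk1 t ht
          have ih' := ih (k+1) (by omega) (by omega)
          refine bound_aux (f' := g (k+1)) (by omega : 1 ≤ n - k) hL.le
            (hderiv k (by omega)) (hzero k hk1 (by omega)) ?_ t ht
          intro u hu'
          have := ih' u hu'
          have hexp : n - k - 1 = n - (k + 1) := by omega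
          rw [hexp]
          exact this
      have final1 : ∀ t ∈ Set.Icc (0:ℝ) 1, |g 1 t| ≤ L * t ^ (n - 1) :=
        main (n - 2) 1 (by omega) le_rfl
      -- mean value on [0, b]
      have hsub : Set.Icc (0:ℝ) b ⊆ Set.Icc (0:ℝ) 1 := Set.Icc_subset_Icc le_rfl hb1
      have hDer : ∀ u ∈ Set.Icc (0:ℝ) b, HasDerivWithinAt ψ (g 1 u) (Set.Icc 0 b) u := by
        intro u hu'
        have := (hderiv 0 (by omega) u (hsub hu')).mono hsub
        rwa [show g 0 = ψ by simp only [hgdef, iteratedDerivWithin_zero]] at this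
      have hbd : ∀ u ∈ Set.Icc (0:ℝ) b, ‖g 1 u‖ ≤ L * b ^ (n-1) := by
        intro u hu'
        have h1 := final1 u (hsub hu')
        have h2 : u ^ (n-1) ≤ b ^ (n-1) := pow_le_pow_left₀ hu'.1 hu'.2 _
        calc ‖g 1 u‖ = |g 1 u| := rfl
        _ ≤ L * u ^ (n-1) := h1
        _ ≤ L * b ^ (n-1) := by nlinarith
      have := Convex.norm_image_sub_le_of_norm_hasDerivWithin_le hDer hbd (convex_Icc 0 b)
        (Set.mem_Icc.2 ⟨ha, hab⟩) (Set.mem_Icc.2 ⟨ha.trans hab, le_rfl⟩)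
      rw [Real.norm_eq_abs, Real.norm_eq_abs, abs_of_nonneg (by linarith : (0:ℝ) ≤ b - a)] at this
      exact this
  -- global bound
  intro a b ha hab
  rcases le_or_gt b 1 with hb1 | hb1
  · exact core a b ha hab hb1
  rcases le_or_gt 1 a with ha1 | ha1
  · rw [hψ1 a ha1, hψ1 b (by linarith), sub_zero, abs_zero]
    have h1 : (0:ℝ) ≤ b ^ (n-1) := pow_nonneg (by linarith) _
    have h2 : (0:ℝ) ≤ b - a := by linarith
    positivity
  · -- a < 1 < b
    have h1 : |ψ 1 - ψ a| ≤ L * 1 ^ (n-1) * (1 - a) := core a 1 ha ha1.le le_rfl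
    rw [one_pow, mul_one] at h1
    have h2 : ψ b = ψ 1 := by rw [hψ1 b hb1.le, hψ1 1 le_rfl]
    rw [h2]
    have h3 : (1:ℝ) ≤ b ^ (n-1) := one_le_pow₀ (by linarith)
    calc |ψ 1 - ψ a| ≤ L * (1 - a) := h1
    _ ≤ L * b ^ (n-1) * (b - a) := by
        have e1 : L * (1 - a) ≤ L * (b - a) := by
          apply mul_le_mul_of_nonneg_left (by linarith) hL.le
        have e2 : L * (b - a) * 1 ≤ L * (b - a) * b ^ (n-1) := by
          apply mul_le_mul_of_nonneg_left h3 (mul_nonneg hL.le (by linarith))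
        nlinarith [e1, e2]

private lemma vdist_bddBelow (D : ℝ) {d : ℕ} (y s : Fin d → ℝ) :
    BddBelow (Set.range fun j : Fin d → ℤ => ∑ i, |s i - y i + (j i : ℝ) * D|) := by
  refine ⟨0, fun b hb => ?_⟩
  obtain ⟨j, rfl⟩ := hb
  exact Finset.sum_nonneg fun i _ => abs_nonneg _

private lemma vdist_nonneg (D : ℝ) {d : ℕ} (y s : Fin d → ℝ) : 0 ≤ vdist D y s :=
  le_csInf ⟨_, Set.mem_range_self 0⟩ fun b hb => by
    obtain ⟨j, rfl⟩ := hb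
    exact Finset.sum_nonneg fun i _ => abs_nonneg _

private lemma vdist_le_sum (D : ℝ) {d : ℕ} (y s : Fin d → ℝ) :
    vdist D y s ≤ ∑ i, |s i - y i| := by
  have : (∑ i, |s i - y i|) ∈
      Set.range fun j : Fin d → ℤ => ∑ i, |s i - y i + (j i : ℝ) * D| := by
    refine ⟨0, ?_⟩
    simp
  exact csInf_le (vdist_bddBelow D y s) this

private lemma vdist_lip (D : ℝ) {d : ℕ} (y s x : Fin d → ℝ) :
    |vdist D y s - vdist D y x| ≤ ∑ i, |s i - x i| := by
  have key : ∀ s x : Fin d → ℝ, vdist D y s ≤ vdist D y x + ∑ i, |s i - x i| := by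
    intro s x
    rw [vdist, ← sub_le_iff_le_add]
    refine le_csInf ⟨_, Set.mem_range_self 0⟩ fun b hb => ?_
    obtain ⟨j, rfl⟩ := hb
    rw [sub_le_iff_le_add]
    calc vdist D y s ≤ ∑ i, |s i - y i + (j i : ℝ) * D| :=
          csInf_le (vdist_bddBelow D y s) ⟨j, rfl⟩
    _ ≤ ∑ i, (|x i - y i + (j i : ℝ) * D| + |s i - x i|) := by
        refine Finset.sum_le_sum fun i _ => ?_
        have : s i - y i + (j i : ℝ) * D = (x i - y i + (j i : ℝ) * D) + (s i - x i) := by ring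
        rw [this]
        exact abs_add_le _ _
    _ = (∑ i, |x i - y i + (j i : ℝ) * D|) + ∑ i, |s i - x i| := by
        rw [Finset.sum_add_distrib]
  rw [abs_sub_le_iff]
  constructor
  · linarith [key s x]
  · have := key x s
    have heq : ∑ i, |x i - s i| = ∑ i, |s i - x i| :=
      Finset.sum_congr rfl fun i _ => abs_sub_comm _ _
    linarith [heq ▸ this]

set_option maxHeartbeats 1000000 in
theorem stmt14 {Ω : Type*} [MeasureSpace Ω] [IsProbabilityMeasure (ℙ : Measure Ω)]
    (D : ℝ) (hD : 0 < D) (d : ℕ) (hd : 1 ≤ d)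
    (α β : ℝ) (hβ : 1 < β) (n : ℕ) (hn : 1 ≤ n)
    (hκ : (α - n - d) / (β - 1) < 1 / 2)
    -- ψ ∈ ℋⁿ
    (ψ : ℝ → ℝ) (hψ0 : ψ 0 = 1) (hψ1 : ∀ x : ℝ, 1 ≤ x → ψ x = 0)
    (hψnonneg : ∀ x : ℝ, 0 ≤ x → 0 ≤ ψ x)
    (hsmooth : ContDiffOn ℝ (n - 1) ψ (Set.Icc 0 1))
    (hLip : ∃ K : NNReal,
      LipschitzOnWith K (iteratedDerivWithin (n - 1) ψ (Set.Icc 0 1)) (Set.Icc 0 1))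
    (hdiff : DifferentiableWithinAt ℝ
      (iteratedDerivWithin (n - 1) ψ (Set.Icc 0 1)) (Set.Icc 0 1) 0)
    (hn0 : iteratedDerivWithin n ψ (Set.Icc 0 1) 0 ≠ 0)
    (hzero : ∀ k : ℕ, 1 ≤ k → k ≤ n - 1 → iteratedDerivWithin k ψ (Set.Icc 0 1) 0 = 0)
    (Z : Ω → ℝ) (Y : Ω → Fin d → ℝ) (hZmeas : Measurable Z) (hYmeas : Measurable Y)
    (hZlaw : Measure.map Z ℙ = paretoMeasure 1 (β - 1))
    (hYlaw : Measure.map Y ℙ = unifCube D d)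
    (hZY : IndepFun Z Y ℙ) :
    ∃ C : ℝ, 0 < C ∧
      ∀ s ∈ Set.Icc (0 : Fin d → ℝ) fun _ => D,
        ∀ x ∈ Set.Icc (0 : Fin d → ℝ) fun _ => D,
          ∫ ω, ((Z ω) ^ (α - d) * ψ (vdist D (Y ω) s / Z ω) -
              (Z ω) ^ (α - d) * ψ (vdist D (Y ω) x / Z ω)) ^ 2 ∂ℙ ≤
            C * (∑ i, |s i - x i|) ^ 2 := by
  obtain ⟨L, hL, hψb⟩ := psi_bound hn hψ1 hsmooth hLip hzero
  have hβ1 : (0:ℝ) < β - 1 := by linarith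
  set γ : ℝ := 2 * (α - n - d) with hγdef
  have hγ : γ < β - 1 := by
    have := (div_lt_iff₀ hβ1).mp hκ
    rw [hγdef]; linarith
  -- a.e. facts
  have hZ1 : ∀ᵐ ω ∂(ℙ : Measure Ω), 1 ≤ Z ω := by
    rw [ae_iff]
    have hset : {ω | ¬ (1:ℝ) ≤ Z ω} = Z ⁻¹' (Set.Iio 1) := by
      ext ω; simp [not_le]
    rw [hset, ← Measure.map_apply hZmeas measurableSet_Iio, hZlaw, paretoMeasure,
      withDensity_apply _ measurableSet_Iio]
    exact lintegral_paretoPDF_of_le le_rfl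
  have hmIcc : MeasurableSet (Set.Icc (0 : Fin d → ℝ) fun _ => D) := by
    rw [← Set.pi_univ_Icc]
    exact MeasurableSet.univ_pi fun i => measurableSet_Icc
  have hYcube : ∀ᵐ ω ∂(ℙ : Measure Ω), Y ω ∈ Set.Icc (0 : Fin d → ℝ) fun _ => D := by
    rw [ae_iff]
    have hset : {ω | ¬ Y ω ∈ Set.Icc (0 : Fin d → ℝ) fun _ => D} =
        Y ⁻¹' (Set.Icc (0 : Fin d → ℝ) fun _ => D)ᶜ := rfl
    rw [hset, ← Measure.map_apply hYmeas hmIcc.compl, hYlaw, unifCube,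
      Measure.smul_apply, Measure.restrict_apply hmIcc.compl, Set.compl_inter_self,
      measure_empty, smul_zero]
  -- integrability of Z ^ γ
  have hae_ge : ∀ᵐ x ∂(paretoMeasure 1 (β-1)), 1 ≤ x := by
    rw [ae_iff]
    have hset : {x : ℝ | ¬ 1 ≤ x} = Set.Iio 1 := by ext x; simp [not_le]
    rw [hset, paretoMeasure, withDensity_apply _ measurableSet_Iio]
    exact lintegral_paretoPDF_of_le le_rfl
  have hgm : AEStronglyMeasurable (fun x : ℝ => x ^ γ) (paretoMeasure 1 (β-1)) := by
    refine ((Real.measurable_exp.comp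
      (Real.measurable_log.mul_const γ)).aestronglyMeasurable).congr ?_
    filter_upwards [hae_ge] with x hx
    exact (Real.rpow_def_of_pos (lt_of_lt_of_le one_pos hx) γ).symm
  have hint_pareto : Integrable (fun x : ℝ => x ^ γ) (paretoMeasure 1 (β-1)) := by
    have hpm : Measurable (paretoPDF 1 (β - 1)) :=
      (measurable_paretoPDFReal 1 (β - 1)).ennreal_ofReal
    rw [paretoMeasure, integrable_withDensity_iff hpm
      (Filter.Eventually.of_forall fun x => ENNReal.ofReal_lt_top)]
    have heq : (fun x : ℝ => x ^ γ * (paretoPDF 1 (β-1) x).toReal) =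
        (Set.Ici (1:ℝ)).indicator (fun x => (β-1) * x ^ (γ - β)) := by
      funext x
      by_cases hx : (1:ℝ) ≤ x
      · have hx0 : (0:ℝ) < x := lt_of_lt_of_le one_pos hx
        rw [Set.indicator_of_mem (Set.mem_Ici.mpr hx), paretoPDF_of_le hx, Real.one_rpow, mul_one,
          ENNReal.toReal_ofReal (mul_nonneg hβ1.le (Real.rpow_nonneg hx0.le _)),
          show γ - β = γ + (-(β-1+1)) by ring, Real.rpow_add hx0]
        ring
      · rw [Set.indicator_of_notMem (fun h => hx (Set.mem_Ici.mp h)), paretoPDF_of_lt (not_le.1 hx),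
          ENNReal.toReal_zero, mul_zero]
    rw [heq, integrable_indicator_iff measurableSet_Ici]
    have hIoi : IntegrableOn (fun x : ℝ => x ^ (γ - β)) (Set.Ioi (1:ℝ)) :=
      (integrableOn_Ioi_rpow_iff one_pos).mpr (by linarith)
    exact Iff.mpr integrableOn_Ici_iff_integrableOn_Ioi (hIoi.const_mul _)
  have hint : Integrable (fun ω => Z ω ^ γ) ℙ := by
    have h2 : Integrable (fun x : ℝ => x ^ γ) (Measure.map Z ℙ) := by
      rw [hZlaw]; exact hint_pareto
    have hgm' : AEStronglyMeasurable (fun x : ℝ => x ^ γ) (Measure.map Z ℙ) := by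
      rw [hZlaw]; exact hgm
    exact (integrable_map_measure hgm' hZmeas.aemeasurable).mp h2
  set M₀ : ℝ := ∫ ω, Z ω ^ γ ∂ℙ with hM₀def
  have hM₀ : 0 ≤ M₀ :=
    integral_nonneg_of_ae (hZ1.mono fun ω h => Real.rpow_nonneg (by linarith) γ)
  set M : ℝ := (d : ℝ) * D with hMdef
  have hM : 0 < M := by
    rw [hMdef]
    have : (0:ℝ) < (d:ℝ) := by exact_mod_cast hd
    positivity
  set c : ℝ := L^2 * M^(n-1) * M^(n-1) with hcdef
  have hc : 0 ≤ c := by positivity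
  refine ⟨c * M₀ + 1, by nlinarith, ?_⟩
  intro s hs x hx
  set t : ℝ := ∑ i, |s i - x i| with htdef
  have ht0 : 0 ≤ t := Finset.sum_nonneg fun i _ => abs_nonneg _
  -- pointwise a.e. bound
  have hbound : ∀ᵐ ω ∂(ℙ : Measure Ω),
      ((Z ω) ^ (α - d) * ψ (vdist D (Y ω) s / Z ω) -
        (Z ω) ^ (α - d) * ψ (vdist D (Y ω) x / Z ω)) ^ 2 ≤ c * t^2 * Z ω ^ γ := by
    filter_upwards [hZ1, hYcube] with ω hz hy
    set z := Z ω with hzdef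
    have hz0 : (0:ℝ) < z := lt_of_lt_of_le one_pos hz
    set u := vdist D (Y ω) s with hudef
    set v := vdist D (Y ω) x with hvdef
    have hboundM : ∀ w : Fin d → ℝ, w ∈ Set.Icc (0 : Fin d → ℝ) (fun _ => D) →
        vdist D (Y ω) w ≤ M := by
      intro w hw
      calc vdist D (Y ω) w ≤ ∑ i, |w i - Y ω i| := vdist_le_sum D (Y ω) w
      _ ≤ ∑ _i : Fin d, D := by
          refine Finset.sum_le_sum fun i _ => ?_
          have h1 : (0:ℝ) ≤ w i := hw.1 i
          have h2 : w i ≤ D := hw.2 i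
          have h3 : (0:ℝ) ≤ Y ω i := hy.1 i
          have h4 : Y ω i ≤ D := hy.2 i
          rw [abs_le]; constructor <;> linarith
      _ = M := by rw [hMdef]; simp [mul_comm]
    have huM : u ≤ M := hboundM s hs
    have hvM : v ≤ M := hboundM x hx
    have hu0 : 0 ≤ u := vdist_nonneg D (Y ω) s
    have hv0 : 0 ≤ v := vdist_nonneg D (Y ω) x
    have huv : |u - v| ≤ t := by
      rw [htdef, hudef, hvdef]
      exact vdist_lip D (Y ω) s x
    -- single-sided key bound
    have key0 : ∀ a b : ℝ, 0 ≤ b → a ≤ M → b ≤ a → a - b ≤ t →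
        (z ^ (α - (d:ℝ)) * ψ (a/z) - z ^ (α - (d:ℝ)) * ψ (b/z)) ^ 2 ≤ c * t^2 * z ^ γ := by
      intro a b hb0 haM hba habt
      have ha0 : 0 ≤ a := hb0.trans hba
      have hbM : b ≤ M := hba.trans haM
      have hstep := hψb (b/z) (a/z) (div_nonneg hb0 hz0.le) (by gcongr)
      have e1 : (M/z)^(n-1) = M^(n-1) * (z ^ ((n:ℝ)-1))⁻¹ := by
        rw [div_pow, div_eq_mul_inv]
        congr 2
        rw [← Real.rpow_natCast z (n-1), Nat.cast_sub hn, Nat.cast_one]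
      have e2 : z ^ (α - (d:ℝ)) * ((z ^ ((n:ℝ)-1))⁻¹ * z⁻¹) = z ^ (α - (n:ℝ) - (d:ℝ)) := by
        rw [← Real.rpow_neg_one z, ← Real.rpow_neg hz0.le, ← Real.rpow_add hz0,
          ← Real.rpow_add hz0]
        congr 1; ring
      have hrp : (0:ℝ) < z ^ (α - (d:ℝ)) := Real.rpow_pos_of_pos hz0 _
      have key : |z ^ (α - (d:ℝ)) * ψ (a/z) - z ^ (α - (d:ℝ)) * ψ (b/z)| ≤
          L * M^(n-1) * z ^ (α - (n:ℝ) - (d:ℝ)) * (a - b) := by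
        calc |z ^ (α - (d:ℝ)) * ψ (a/z) - z ^ (α - (d:ℝ)) * ψ (b/z)|
            = z ^ (α - (d:ℝ)) * |ψ (a/z) - ψ (b/z)| := by
              rw [← mul_sub, abs_mul, abs_of_pos hrp]
        _ ≤ z ^ (α - (d:ℝ)) * (L * (M/z)^(n-1) * ((a-b)/z)) := by
              refine mul_le_mul_of_nonneg_left ?_ hrp.le
              calc |ψ (a/z) - ψ (b/z)| ≤ L * (a/z)^(n-1) * (a/z - b/z) := hstep
              _ = L * (a/z)^(n-1) * ((a-b)/z) := by rw [← sub_div]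
              _ ≤ L * (M/z)^(n-1) * ((a-b)/z) := by
                  have h1 : (a/z)^(n-1) ≤ (M/z)^(n-1) := by
                    apply pow_le_pow_left₀ (div_nonneg ha0 hz0.le)
                    gcongr
                  have h2 : 0 ≤ (a-b)/z := div_nonneg (by linarith) hz0.le
                  exact mul_le_mul_of_nonneg_right
                    (mul_le_mul_of_nonneg_left h1 hL.le) h2
        _ = L * M^(n-1) * z ^ (α - (n:ℝ) - (d:ℝ)) * (a - b) := by
              rw [e1, div_eq_mul_inv (a-b) z, ← e2]; ring
      have hzz : z ^ (α - (n:ℝ) - (d:ℝ)) * z ^ (α - (n:ℝ) - (d:ℝ)) = z ^ γ := by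
        rw [← Real.rpow_add hz0, hγdef]
        congr 1; ring
      have hsq : (z ^ (α - (d:ℝ)) * ψ (a/z) - z ^ (α - (d:ℝ)) * ψ (b/z)) ^ 2 ≤
          (L * M^(n-1) * z ^ (α - (n:ℝ) - (d:ℝ)) * (a - b)) ^ 2 := by
        rw [← sq_abs (z ^ (α - (d:ℝ)) * ψ (a/z) - z ^ (α - (d:ℝ)) * ψ (b/z))]
        exact pow_le_pow_left₀ (abs_nonneg _) key 2
      have hab2 : (a - b)^2 ≤ t^2 := by
        apply sq_le_sq'
        · linarith
        · exact habt
      have hzγ : (0:ℝ) ≤ z ^ γ := Real.rpow_nonneg hz0.le _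
      calc (z ^ (α - (d:ℝ)) * ψ (a/z) - z ^ (α - (d:ℝ)) * ψ (b/z)) ^ 2
          ≤ (L * M^(n-1) * z ^ (α - (n:ℝ) - (d:ℝ)) * (a - b)) ^ 2 := hsq
      _ = c * z ^ γ * (a - b)^2 := by
          rw [hcdef, ← hzz]; ring
      _ ≤ c * z ^ γ * t^2 := by
          apply mul_le_mul_of_nonneg_left hab2 (mul_nonneg hc hzγ)
      _ = c * t^2 * z ^ γ := by ring
    rcases le_total v u with h | h
    · exact key0 u v hv0 huM h (by rw [← abs_of_nonneg (by linarith : (0:ℝ) ≤ u - v)]; exact huv)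
    · have hswap : (z ^ (α - (d:ℝ)) * ψ (u/z) - z ^ (α - (d:ℝ)) * ψ (v/z)) ^ 2 =
          (z ^ (α - (d:ℝ)) * ψ (v/z) - z ^ (α - (d:ℝ)) * ψ (u/z)) ^ 2 := by ring
      rw [hswap]
      refine key0 v u hu0 hvM h ?_
      rw [← abs_of_nonneg (by linarith : (0:ℝ) ≤ v - u), abs_sub_comm]
      exact huv
  calc ∫ ω, ((Z ω) ^ (α - d) * ψ (vdist D (Y ω) s / Z ω) -
        (Z ω) ^ (α - d) * ψ (vdist D (Y ω) x / Z ω)) ^ 2 ∂ℙ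
      ≤ ∫ ω, c * t^2 * Z ω ^ γ ∂ℙ :=
        integral_mono_of_nonneg (Filter.Eventually.of_forall fun ω => sq_nonneg _)
          (hint.const_mul _) hbound
  _ = c * t^2 * M₀ := by rw [integral_const_mul]
  _ ≤ (c * M₀ + 1) * t^2 := by nlinarith [sq_nonneg t]
end
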